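/- Finite conjunctions and finite disjunctions of equations are again equations. -/

import Mathlib

open FirstOrder FirstOrder.Language Set

universe u v w

namespace Equationality

variable {L : FirstOrder.Language.{u, v}}

section Struc
variable {M : Type w} [L.Structure M]

/-- The instance of the formula `φ(x; y)` at the parameter tuple `b`. -/
def instSet {α β : Type*} (φ : L.Formula (α ⊕ β)) (b : β → M) : Set (α → M) :=
  {a | φ.Realize (Sum.elim a b)}

/-- A sequence of `γ`-tuples indexed by a linear order is indiscernible if any two strictly
increasing finite subsequences satisfy the same formulas. -/
def IsIndiscernible {I : Type*} [LinearOrder I] {γ : Type*} (a : I → γ → M) : Prop :=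
  ∀ (n : ℕ) (i j : Fin n → I), StrictMono i → StrictMono j →
    ∀ φ : L.Formula (Fin n × γ),
      φ.Realize (fun p => a (i p.1) p.2) ↔ φ.Realize (fun p => a (j p.1) p.2)

/-- The complete type of a tuple over `∅`, as the set of formulas it realizes. -/
def typeOf {γ : Type*} (a : γ → M) : Set (L.Formula γ) := {φ | φ.Realize a}

end Struc

variable (T : L.Theory)

/-- The conjunction of the formulas `f i`, `i ∈ s` (the older Mathlib `BoundedFormula.iInf`). -/
noncomputable def finsetIInf {α β : Type*} {n : ℕ} (s : Finset β) (f : β → L.BoundedFormula α n) :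
    L.BoundedFormula α n :=
  (s.toList.map f).foldr (· ⊓ ·) ⊤

/-- The disjunction of the formulas `f i`, `i ∈ s` (the older Mathlib `BoundedFormula.iSup`). -/
noncomputable def finsetISup {α β : Type*} {n : ℕ} (s : Finset β) (f : β → L.BoundedFormula α n) :
    L.BoundedFormula α n :=
  (s.toList.map f).foldr (· ⊔ ·) ⊥

/-- `φ(x; y)` is an equation for `T`: in every model of `T`, the family of finite
intersections of instances of `φ` has the descending chain condition. -/
def IsEquation {α β : Type*} (φ : L.Formula (α ⊕ β)) : Prop :=
  ∀ (M : Theory.ModelType.{u, v, max u v} T) (B : ℕ → Finset (β → M)),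
    (Antitone fun n => ⋂ b ∈ B n, instSet φ b) →
    ∃ N, ∀ n, N ≤ n → (⋂ b ∈ B n, instSet φ b) = ⋂ b ∈ B N, instSet φ b

/-- A complete type over `∅` (in the variables `γ`), presented as the set of formulas
realized by some tuple in some model of `T`. -/
def IsRealizedType {γ : Type*} (p : Set (L.Formula γ)) : Prop :=
  ∃ (M : Theory.ModelType.{u, v, max u v} T) (a : γ → M), typeOf a = p

/-- `p ⟶ q`: there are a model of `T`, a tuple `b` and an indiscernible sequence `(aᵢ)`
with `aᵢ ⊨ p(x, b)` for `i > 0` and `a₀ ⊨ q(x, b)`. -/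
def Pf {α β : Type*} (p q : Set (L.Formula (α ⊕ β))) : Prop :=
  ∃ (M : Theory.ModelType.{u, v, max u v} T) (b : β → M) (a : ℕ → α → M),
    IsIndiscernible (L := L) a ∧ (∀ i : ℕ, 0 < i → typeOf (Sum.elim (a i) b) = p) ∧
      typeOf (Sum.elim (a 0) b) = q

/-! ### Auxiliary combinatorial machinery -/

section MultisetWF

variable {X : Type*} (r : X → X → Prop)

/-- One-step multiset extension of a relation: remove one element, add a multiset of
elements each strictly below the removed one. -/
def MStep (m' m : Multiset X) : Prop :=
  ∃ a K n, m = a ::ₘ n ∧ m' = K + n ∧ ∀ b ∈ K, r b a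

variable {r}

theorem mstep_acc_cons {a : X} (ha : Acc r a) :
    ∀ n : Multiset X, Acc (MStep r) n → Acc (MStep r) (a ::ₘ n) := by
  induction ha with
  | intro a _ iha =>
    intro n hn
    induction hn with
    | intro n hn' ihn =>
      constructor
      rintro m' ⟨c, K, n0, hm, rfl, hK⟩
      rcases Multiset.cons_eq_cons.1 hm with ⟨rfl, rfl⟩ | ⟨hne, u, rfl, rfl⟩
      · have key : ∀ K : Multiset X, (∀ b ∈ K, r b a) → Acc (MStep r) (K + n) := by
          intro K
          induction K using Multiset.induction with
          | empty => intro _; simpa using Acc.intro n hn'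
          | cons b K ih =>
            intro hK
            rw [Multiset.cons_add]
            exact iha b (hK b (Multiset.mem_cons_self b K)) _
              (ih fun x hx => hK x (Multiset.mem_cons_of_mem hx))
        exact key K hK
      · have h1 : MStep r (K + u) (c ::ₘ u) := ⟨c, K, u, rfl, rfl, hK⟩
        have h2 := ihn _ h1
        have h3 : K + (a ::ₘ u) = a ::ₘ (K + u) := by rw [Multiset.add_cons]
        rwa [h3]

theorem mstep_wf (hr : WellFounded r) : WellFounded (MStep r) := by
  constructor
  intro m
  induction m using Multiset.induction with
  | empty =>
    constructor
    rintro m' ⟨a, K, n, hm, _, _⟩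
    exact absurd hm.symm (Multiset.cons_ne_zero)
  | cons a n ih => exact mstep_acc_cons (hr.apply a) n ih

theorem transGen_mstep (repl : X → Multiset X) :
    ∀ (t : Multiset X) (a : X) (base : Multiset X),
      (∀ c ∈ a ::ₘ t, ∀ b ∈ repl c, r b c) →
      Relation.TransGen (MStep r) (base + (a ::ₘ t).bind repl) (base + (a ::ₘ t)) := by
  intro t
  induction t using Multiset.induction with
  | empty =>
    intro a base h
    refine Relation.TransGen.single ⟨a, repl a, base, ?_, ?_, fun b hb => h a (by simp) b hb⟩
    · rw [Multiset.add_cons]; simp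
    · simp [Multiset.cons_bind]; ac_rfl
  | cons c t ih =>
    intro a base h
    have step1 := ih c (base + repl a) (fun x hx => h x (Multiset.mem_cons_of_mem hx))
    have step2 : MStep r (base + repl a + (c ::ₘ t)) (base + (a ::ₘ c ::ₘ t)) := by
      refine ⟨a, repl a, base + (c ::ₘ t), by rw [Multiset.add_cons], ?_,
        fun b hb => h a (Multiset.mem_cons_self _ _) b hb⟩
      ac_rfl
    have chain := step1.tail step2
    have heq : base + repl a + (c ::ₘ t).bind repl = base + (a ::ₘ c ::ₘ t).bind repl := by
      rw [Multiset.cons_bind (a := a), ← add_assoc]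
    rwa [heq] at chain

end MultisetWF

section UnionWF

variable {Y : Type*}

theorem mem_msup {m : Multiset (Set Y)} {x : Y} : x ∈ m.sup ↔ ∃ A ∈ m, x ∈ A := by
  induction m using Multiset.induction with
  | empty => simp
  | cons A m ih => simp [Multiset.sup_cons, ih, Set.sup_eq_union]

/-- Finite unions of members of `C`. -/
def UFin (C : Set (Set Y)) : Set (Set Y) :=
  {W | ∃ m : Multiset (Set Y), (∀ A ∈ m, A ∈ C) ∧ m.sup = W}

theorem mem_uFin_of_mem {C : Set (Set Y)} {A : Set Y} (hA : A ∈ C) : A ∈ UFin C :=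
  ⟨{A}, by simpa using hA, Multiset.sup_singleton⟩

theorem uFin_wf (C : Set (Set Y)) (hI : ∀ A ∈ C, ∀ B ∈ C, A ∩ B ∈ C)
    (hwf : WellFounded (fun A B : Set Y => A ⊂ B ∧ A ∈ C ∧ B ∈ C)) :
    WellFounded (fun W' W : Set Y => W' ⊂ W ∧ W' ∈ UFin C ∧ W ∈ UFin C) := by
  classical
  set rC : Set Y → Set Y → Prop := fun A B => A ⊂ B ∧ A ∈ C ∧ B ∈ C with hrC
  set rU : Set Y → Set Y → Prop :=
    fun W' W => W' ⊂ W ∧ W' ∈ UFin C ∧ W ∈ UFin C with hrU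
  have hT : WellFounded (Relation.TransGen (MStep rC)) := (mstep_wf hwf).transGen
  have main : ∀ m : Multiset (Set Y), (∀ A ∈ m, A ∈ C) → Acc rU m.sup := by
    intro m
    induction m using hT.induction with
    | _ m ih =>
      intro hmC
      constructor
      rintro W' ⟨hsub, ⟨m₁, hm₁C, hm₁sup⟩, -⟩
      set mK := m.filter (fun A => A ⊆ W') with hmK
      set mR := m.filter (fun A => ¬ A ⊆ W') with hmR
      have hsplit : mK + mR = m := Multiset.filter_add_not _ m
      set g : Set Y → Multiset (Set Y) := fun A => m₁.map (fun D => D ∩ A) with hg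
      set m' : Multiset (Set Y) := mK + mR.bind g with hm'
      have hRmem : ∀ A ∈ mR, A ∈ C ∧ ¬ A ⊆ W' := by
        intro A hA
        rw [hmR, Multiset.mem_filter] at hA
        exact ⟨hmC A hA.1, hA.2⟩
      have hpieces : ∀ A ∈ mR, ∀ b ∈ g A, rC b A := by
        intro A hA b hb
        rw [hg, Multiset.mem_map] at hb
        obtain ⟨D, hD, rfl⟩ := hb
        obtain ⟨hAC, hAW⟩ := hRmem A hA
        have hDW : D ⊆ W' := by
          rw [← hm₁sup]; intro x hx; exact mem_msup.2 ⟨D, hD, hx⟩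
        refine ⟨⟨Set.inter_subset_right, fun hc => hAW ?_⟩, hI D (hm₁C D hD) A hAC, hAC⟩
        exact fun x hx => hDW (hc hx).1
      have hm'C : ∀ A ∈ m', A ∈ C := by
        intro A hA
        rw [hm', Multiset.mem_add] at hA
        rcases hA with hA | hA
        · exact hmC A (Multiset.mem_of_mem_filter hA)
        · rw [Multiset.mem_bind] at hA
          obtain ⟨B, hB, hAB⟩ := hA
          exact (hpieces B hB A hAB).2.1
      have hm'sup : m'.sup = W' := by
        ext x
        rw [mem_msup]
        constructor
        · rintro ⟨A, hA, hx⟩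
          rw [hm', Multiset.mem_add] at hA
          rcases hA with hA | hA
          · exact (Multiset.mem_filter.1 hA).2 hx
          · rw [Multiset.mem_bind] at hA
            obtain ⟨B, hB, hAB⟩ := hA
            rw [hg, Multiset.mem_map] at hAB
            obtain ⟨D, hD, rfl⟩ := hAB
            rw [← hm₁sup]
            exact mem_msup.2 ⟨D, hD, hx.1⟩
        · intro hx
          have hxm : x ∈ m.sup := hsub.subset hx
          obtain ⟨A, hAm, hxA⟩ := mem_msup.1 hxm
          by_cases hAW : A ⊆ W'
          · refine ⟨A, ?_, hxA⟩
            rw [hm', Multiset.mem_add]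
            exact Or.inl (Multiset.mem_filter.2 ⟨hAm, hAW⟩)
          · obtain ⟨D, hD, hxD⟩ := mem_msup.1 (hm₁sup ▸ hx : x ∈ m₁.sup)
            refine ⟨D ∩ A, ?_, hxD, hxA⟩
            rw [hm', Multiset.mem_add]
            refine Or.inr (Multiset.mem_bind.2 ⟨A, ?_, ?_⟩)
            · rw [hmR, Multiset.mem_filter]; exact ⟨hAm, hAW⟩
            · rw [hg, Multiset.mem_map]; exact ⟨D, hD, rfl⟩
      have hRne : mR ≠ 0 := by
        intro h0
        have hWsub : m.sup ⊆ W' := by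
          intro x hx
          obtain ⟨A, hAm, hxA⟩ := mem_msup.1 hx
          by_cases hAW : A ⊆ W'
          · exact hAW hxA
          · exact absurd (Multiset.mem_filter.2 ⟨hAm, hAW⟩) (by rw [← hmR, h0]; simp)
        exact hsub.not_subset hWsub
      obtain ⟨a, ha⟩ := Multiset.exists_mem_of_ne_zero hRne
      obtain ⟨t, ht⟩ := Multiset.exists_cons_of_mem ha
      have htrans : Relation.TransGen (MStep rC) m' m := by
        have hstep := transGen_mstep g t a mK (by rw [← ht]; exact hpieces)
        rw [← ht, hsplit] at hstep
        exact hstep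
      have hAcc := ih m' htrans hm'C
      rwa [hm'sup] at hAcc
  constructor
  intro W
  by_cases hW : W ∈ UFin C
  · obtain ⟨m, hmC, rfl⟩ := hW
    exact main m hmC
  · exact Acc.intro W (fun W' hW' => absurd hW'.2.2 hW)

theorem stabilize {U : Set (Set Y)}
    (hwf : WellFounded (fun W' W : Set Y => W' ⊂ W ∧ W' ∈ U ∧ W ∈ U))
    (D : ℕ → Set Y) (hanti : Antitone D) (hD : ∀ n, D n ∈ U) :
    ∃ N, ∀ n, N ≤ n → D n = D N := by
  obtain ⟨W, hWmem, hmin⟩ := hwf.has_min (Set.range D) ⟨D 0, Set.mem_range_self 0⟩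
  obtain ⟨N, rfl⟩ := hWmem
  refine ⟨N, fun n hn => ?_⟩
  by_contra hne
  exact hmin (D n) (Set.mem_range_self n)
    ⟨Set.ssubset_iff_subset_ne.2 ⟨hanti hn, hne⟩, hD n, hD N⟩

end UnionWF

/-! ### The family of finite intersections of instances -/

section FamC

variable {α β γ : Type*} {M : Type*} [L.Structure M]

theorem realize_finsetIInf {ι κ N : Type*} [L.Structure N] {n : ℕ} (s : Finset κ)
    (f : κ → L.BoundedFormula ι n) (v : ι → N) (xs : Fin n → N) :
    (finsetIInf s f).Realize v xs ↔ ∀ i ∈ s, (f i).Realize v xs := by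
  have key : ∀ l : List κ, ((l.map f).foldr (· ⊓ ·) ⊤ : L.BoundedFormula ι n).Realize v xs ↔
      ∀ i ∈ l, (f i).Realize v xs := by
    intro l
    induction l with
    | nil => simp
    | cons a l ih => simp [BoundedFormula.realize_inf, ih]
  unfold finsetIInf
  rw [key]
  simp [Finset.mem_toList]

theorem realize_finsetISup {ι κ N : Type*} [L.Structure N] {n : ℕ} (s : Finset κ)
    (f : κ → L.BoundedFormula ι n) (v : ι → N) (xs : Fin n → N) :
    (finsetISup s f).Realize v xs ↔ ∃ i ∈ s, (f i).Realize v xs := by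
  have key : ∀ l : List κ, ((l.map f).foldr (· ⊔ ·) ⊥ : L.BoundedFormula ι n).Realize v xs ↔
      ∃ i ∈ l, (f i).Realize v xs := by
    intro l
    induction l with
    | nil => simp
    | cons a l ih => simp [BoundedFormula.realize_sup, ih]
  unfold finsetISup
  rw [key]
  simp [Finset.mem_toList]

/-- Finite intersections of instances of the formulas `φ i`, `i ∈ s`. -/
def famC (s : Finset γ) (φ : γ → L.Formula (α ⊕ β)) : Set (Set (α → M)) :=
  {X | ∃ F : γ → Finset (β → M), X = ⋂ i ∈ s, ⋂ b ∈ F i, instSet (φ i) b}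

theorem famC_inter (s : Finset γ) (φ : γ → L.Formula (α ⊕ β)) :
    ∀ A ∈ famC (M := M) s φ, ∀ B ∈ famC (M := M) s φ, A ∩ B ∈ famC (M := M) s φ := by
  classical
  rintro A ⟨F, rfl⟩ B ⟨F', rfl⟩
  refine ⟨fun i => F i ∪ F' i, ?_⟩
  ext x
  simp only [Set.mem_inter_iff, Set.mem_iInter, Finset.mem_union]
  constructor
  · rintro ⟨h1, h2⟩ i hi b hb
    rcases hb with hb | hb
    · exact h1 i hi b hb
    · exact h2 i hi b hb
  · intro hx
    exact ⟨fun i hi b hb => hx i hi b (Or.inl hb), fun i hi b hb => hx i hi b (Or.inr hb)⟩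

theorem famC_conj (s : Finset γ) (φ : γ → L.Formula (α ⊕ β)) (B : Finset (β → M)) :
    (⋂ b ∈ B, instSet (finsetIInf s φ) b) ∈ famC (M := M) s φ := by
  refine ⟨fun _ => B, ?_⟩
  ext x
  simp only [Set.mem_iInter, instSet, Set.mem_setOf_eq, Formula.Realize,
    realize_finsetIInf]
  tauto

theorem famC_disj (s : Finset γ) (φ : γ → L.Formula (α ⊕ β)) (B : Finset (β → M)) :
    (⋂ b ∈ B, instSet (finsetISup s φ) b) ∈ UFin (famC (M := M) s φ) := by
  classical
  refine ⟨(Finset.univ : Finset ({x // x ∈ B} → {i // i ∈ s})).val.map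
      (fun f => ⋂ b : {x // x ∈ B}, instSet (φ ((f b : {i // i ∈ s}) : γ)) (b : β → M)),
    ?_, ?_⟩
  · rintro A hA
    rw [Multiset.mem_map] at hA
    obtain ⟨f, -, rfl⟩ := hA
    refine ⟨fun i => B.filter (fun b => ∃ hb : b ∈ B, ((f ⟨b, hb⟩ : {i // i ∈ s}) : γ) = i), ?_⟩
    ext x
    simp only [Set.mem_iInter, Finset.mem_filter]
    constructor
    · rintro hx i hi b ⟨hbB, hb, rfl⟩
      exact hx ⟨b, hb⟩
    · intro hx b
      exact hx ((f b : {i // i ∈ s}) : γ) (f b).2 (b : β → M) ⟨b.2, b.2, by rw [Subtype.coe_eta]⟩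
  · ext x
    rw [mem_msup]
    simp only [Multiset.mem_map, Finset.mem_val, Finset.mem_univ, true_and]
    constructor
    · rintro ⟨A, ⟨f, rfl⟩, hx⟩
      simp only [Set.mem_iInter] at hx ⊢
      intro b hb
      have hxb := hx ⟨b, hb⟩
      simp only [instSet, Set.mem_setOf_eq, Formula.Realize, realize_finsetISup]
      exact ⟨((f ⟨b, hb⟩ : {i // i ∈ s}) : γ), (f ⟨b, hb⟩).2, hxb⟩
    · intro hx
      simp only [Set.mem_iInter] at hx
      have hchoice : ∀ b : {x // x ∈ B},
          ∃ i : {i // i ∈ s}, x ∈ instSet (φ (i : γ)) (b : β → M) := by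
        intro b
        have hxb := hx (b : β → M) b.2
        simp only [instSet, Set.mem_setOf_eq, Formula.Realize,
          realize_finsetISup] at hxb
        obtain ⟨i, hi, hreal⟩ := hxb
        exact ⟨⟨i, hi⟩, hreal⟩
      choose f hf using hchoice
      exact ⟨_, ⟨f, rfl⟩, Set.mem_iInter.2 hf⟩

end FamC

theorem famC_wf {α β γ : Type (max u v)} (s : Finset γ) (φ : γ → L.Formula (α ⊕ β))
    (h : ∀ i ∈ s, IsEquation T (φ i)) (M : Theory.ModelType.{u, v, max u v} T) :
    WellFounded (fun A B : Set (α → M) =>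
      A ⊂ B ∧ A ∈ famC (M := M) s φ ∧ B ∈ famC (M := M) s φ) := by
  classical
  haveI : IsIrrefl (Set (α → M)) (fun A B : Set (α → M) =>
      A ⊂ B ∧ A ∈ famC (M := M) s φ ∧ B ∈ famC (M := M) s φ) :=
    ⟨fun a h => (ssubset_irrefl a) h.1⟩
  haveI : IsTrans (Set (α → M)) (fun A B : Set (α → M) =>
      A ⊂ B ∧ A ∈ famC (M := M) s φ ∧ B ∈ famC (M := M) s φ) :=
    ⟨fun _ _ _ h1 h2 => ⟨h1.1.trans h2.1, h1.2.1, h2.2.2⟩⟩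
  haveI : IsStrictOrder (Set (α → M)) (fun A B : Set (α → M) =>
      A ⊂ B ∧ A ∈ famC (M := M) s φ ∧ B ∈ famC (M := M) s φ) := { }
  rw [RelEmbedding.wellFounded_iff_isEmpty]
  constructor
  intro e
  have hdesc : ∀ n : ℕ, e (n+1) ⊂ e n ∧ e (n+1) ∈ famC (M := M) s φ ∧
      e n ∈ famC (M := M) s φ := fun n => e.map_rel_iff.2 (Nat.lt_succ_self n)
  have hmem : ∀ n, e n ∈ famC (M := M) s φ := fun n => (hdesc n).2.2
  choose F hF using hmem
  set G : ℕ → γ → Finset (β → M) := fun n i => (Finset.range (n+1)).biUnion (fun m => F m i)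
    with hG
  have hmono : ∀ {m n : ℕ}, m ≤ n → (e n : Set (α → M)) ⊆ e m := by
    intro m n hmn
    induction hmn with
    | refl => exact subset_rfl
    | step h ih => exact Set.Subset.trans (hdesc _).1.subset ih
  have hGf : ∀ n, (⋂ i ∈ s, ⋂ b ∈ G n i, instSet (φ i) b) = e n := by
    intro n
    have h1 : (⋂ i ∈ s, ⋂ b ∈ G n i, instSet (φ i) b) = ⋂ m ∈ Finset.range (n+1), (e m : Set (α → M)) := by
      ext x
      simp only [Set.mem_iInter, hG, Finset.mem_biUnion, Finset.mem_range]
      constructor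
      · intro hx m hm
        rw [hF m]
        simp only [Set.mem_iInter]
        intro i hi b hb
        exact hx i hi b ⟨m, hm, hb⟩
      · rintro hx i hi b ⟨m, hm, hb⟩
        have hxm := hx m hm
        rw [hF m] at hxm
        simp only [Set.mem_iInter] at hxm
        exact hxm i hi b hb
    have h2 : (⋂ m ∈ Finset.range (n+1), (e m : Set (α → M))) = e n := by
      apply Set.Subset.antisymm
      · exact Set.iInter₂_subset n (Finset.self_mem_range_succ n)
      · exact Set.subset_iInter₂ fun m hm => hmono (Nat.lt_succ_iff.1 (Finset.mem_range.1 hm))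
    rw [h1, h2]
  have hanti : ∀ i : γ, Antitone (fun n => ⋂ b ∈ G n i, instSet (φ i) b) := by
    intro i m n hmn
    refine Set.subset_iInter₂ fun b hb => ?_
    refine Set.iInter₂_subset b ?_
    simp only [hG, Finset.mem_biUnion, Finset.mem_range] at hb ⊢
    obtain ⟨k, hk, hbk⟩ := hb
    exact ⟨k, lt_of_lt_of_le hk (by omega), hbk⟩
  have hstab : ∀ i ∈ s, ∃ N, ∀ n, N ≤ n →
      (⋂ b ∈ G n i, instSet (φ i) b) = ⋂ b ∈ G N i, instSet (φ i) b :=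
    fun i hi => h i hi M (fun n => G n i) (hanti i)
  choose! N hN using hstab
  have key : ∀ (i) (_ : i ∈ s), (⋂ b ∈ G (s.sup N + 1) i, instSet (φ i) b) =
      ⋂ b ∈ G (s.sup N) i, instSet (φ i) b := by
    intro i hi
    rw [hN i hi (s.sup N + 1) (le_trans (Finset.le_sup hi) (Nat.le_succ _)),
      hN i hi (s.sup N) (Finset.le_sup hi)]
  have heq : (e (s.sup N + 1) : Set (α → M)) = e (s.sup N) := by
    rw [← hGf (s.sup N + 1), ← hGf (s.sup N)]
    exact Set.iInter₂_congr key
  exact absurd heq (hdesc (s.sup N)).1.ne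

/-- Finite conjunctions and finite disjunctions of equations
`φ₁(x; y), …, φₙ(x; y)` (all with the same partition of the variables) are again equations. -/
theorem isEquation_iInf_and_iSup {α β γ : Type (max u v)} [Finite α] [Finite β]
    (s : Finset γ) (φ : γ → L.Formula (α ⊕ β)) (h : ∀ i ∈ s, IsEquation T (φ i)) :
    IsEquation T (finsetIInf s φ) ∧ IsEquation T (finsetISup s φ) := by
  constructor
  · intro M B hanti
    exact stabilize
      (uFin_wf (famC (M := M) s φ) (famC_inter s φ) (famC_wf T s φ h M))
      _ hanti (fun n => mem_uFin_of_mem (famC_conj s φ (B n)))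
  · intro M B hanti
    exact stabilize
      (uFin_wf (famC (M := M) s φ) (famC_inter s φ) (famC_wf T s φ h M))
      _ hanti (fun n => famC_disj s φ (B n))

end Equationality
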